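/- arXiv:0807.2099 — 3 statements merged into one kernel-verified Lean document; each statement's English description precedes it below -/
import Mathlib

section
/- Let n be a positive integer such that there exists an additively indecomposable positive-definite ℤ-lattice of rank n. Then any n-criterion set must contain at least one additively indecomposable lattice of rank n. -/
open Matrix

/-- A (Gram matrix of a) positive-definite integral `ℤ`-lattice. -/
def PosDefLat {ι : Type} [Fintype ι] (A : Matrix ι ι ℤ) : Prop :=
  A.IsSymm ∧ ∀ x : ι → ℤ, x ≠ 0 → 0 < x ⬝ᵥ A *ᵥ x

/-- `L` represents `A`: there is a bilinear-form-preserving `ℤ`-linear map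
(automatically injective when the forms are positive definite). -/
def Represents {ι κ : Type} [Fintype ι] [Fintype κ]
    (L : Matrix ι ι ℤ) (A : Matrix κ κ ℤ) : Prop :=
  ∃ M : Matrix ι κ ℤ, Mᵀ * L * M = A

/-- Two positive-definite lattices are isometric iff each represents the other. -/
def LatIsometric {ι κ : Type} [Fintype ι] [Fintype κ]
    (A : Matrix ι ι ℤ) (B : Matrix κ κ ℤ) : Prop :=
  Represents A B ∧ Represents B A

/-- `L` is `n`-universal: it represents every positive-definite rank-`n` lattice. -/
def NUniversal (n : ℕ) {ι : Type} [Fintype ι] (L : Matrix ι ι ℤ) : Prop :=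
  ∀ A : Matrix (Fin n) (Fin n) ℤ, PosDefLat A → Represents L A

/-- An `n`-criterion set: a set of positive-definite rank-`n` lattices such that a
lattice is `n`-universal iff it represents every member of the set. -/
def IsCriterionSet (n : ℕ) (S : Finset (Matrix (Fin n) (Fin n) ℤ)) : Prop :=
  (∀ A ∈ S, PosDefLat A) ∧
  ∀ (m : ℕ) (L : Matrix (Fin m) (Fin m) ℤ), PosDefLat L →
    (NUniversal n L ↔ ∀ A ∈ S, Represents L A)

/-- `A` is additively indecomposable: whenever an orthogonal sum `B₁ ⊥ B₂` of
positive-definite lattices represents `A` (via block components `M₁`, `M₂`),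
the projection to one factor is zero. -/
def AddIndecomposable {κ : Type} [Fintype κ] (A : Matrix κ κ ℤ) : Prop :=
  ∀ (m₁ m₂ : ℕ) (B₁ : Matrix (Fin m₁) (Fin m₁) ℤ) (B₂ : Matrix (Fin m₂) (Fin m₂) ℤ),
    PosDefLat B₁ → PosDefLat B₂ →
    ∀ (M₁ : Matrix (Fin m₁) κ ℤ) (M₂ : Matrix (Fin m₂) κ ℤ),
      M₁ᵀ * B₁ * M₁ + M₂ᵀ * B₂ * M₂ = A → M₁ = 0 ∨ M₂ = 0

/-- The Gram matrix of the `E₈` root lattice. -/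
def E8 : Matrix (Fin 8) (Fin 8) ℤ :=
  !![ 2, -1,  0,  0,  0,  0,  0,  0;
     -1,  2, -1,  0,  0,  0,  0,  0;
      0, -1,  2, -1,  0,  0,  0,  0;
      0,  0, -1,  2, -1,  0,  0,  0;
      0,  0,  0, -1,  2, -1,  0, -1;
      0,  0,  0,  0, -1,  2, -1,  0;
      0,  0,  0,  0,  0, -1,  2,  0;
      0,  0,  0,  0, -1,  0,  0,  2]

lemma represents_trans {ι κ μ : Type} [Fintype ι] [Fintype κ] [Fintype μ]
    {L : Matrix ι ι ℤ} {A : Matrix κ κ ℤ} {B : Matrix μ μ ℤ}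
    (h1 : ∃ M : Matrix ι κ ℤ, Mᵀ * L * M = A)
    (h2 : ∃ M : Matrix κ μ ℤ, Mᵀ * A * M = B) :
    ∃ M : Matrix ι μ ℤ, Mᵀ * L * M = B := by
  obtain ⟨M, hM⟩ := h1
  obtain ⟨N, hN⟩ := h2
  refine ⟨M * N, ?_⟩
  rw [transpose_mul, ← hN, ← hM]
  simp only [Matrix.mul_assoc]

lemma represents_submatrix {ι κ μ : Type} [Fintype ι] [Fintype κ] [Fintype μ]
    (e : κ ≃ ι) (L : Matrix ι ι ℤ) (A : Matrix μ μ ℤ)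
    (h : ∃ M : Matrix ι μ ℤ, Mᵀ * L * M = A) :
    ∃ M : Matrix κ μ ℤ, Mᵀ * (L.submatrix e e) * M = A := by
  obtain ⟨M, hM⟩ := h
  refine ⟨M.submatrix e (id : μ → μ), ?_⟩
  rw [transpose_submatrix, submatrix_mul_equiv, submatrix_mul_equiv]
  simpa using hM

lemma quadform_submatrix {ι κ : Type} [Fintype ι] [Fintype κ]
    (e : κ ≃ ι) (L : Matrix ι ι ℤ) (x : κ → ℤ) :
    x ⬝ᵥ (L.submatrix e e) *ᵥ x = (x ∘ e.symm) ⬝ᵥ L *ᵥ (x ∘ e.symm) := by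
  rw [submatrix_mulVec_equiv]
  simp only [dotProduct, Function.comp_apply]
  refine Fintype.sum_equiv e _ _ (fun k => ?_)
  simp

lemma posdef_submatrix {ι κ : Type} [Fintype ι] [Fintype κ]
    (e : κ ≃ ι) {L : Matrix ι ι ℤ} (h : PosDefLat L) :
    PosDefLat (L.submatrix e e) := by
  refine ⟨?_, ?_⟩
  · unfold Matrix.IsSymm
    rw [transpose_submatrix, h.1]
  · intro x hx
    rw [quadform_submatrix]
    apply h.2
    intro hc
    apply hx
    funext k
    have := congrFun hc (e k)
    simpa using this
lemma quadform_fromBlocks {ι κ : Type} [Fintype ι] [Fintype κ]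
    (A : Matrix ι ι ℤ) (B : Matrix κ κ ℤ) (x : ι ⊕ κ → ℤ) :
    x ⬝ᵥ (fromBlocks A 0 0 B) *ᵥ x
      = (x ∘ Sum.inl) ⬝ᵥ A *ᵥ (x ∘ Sum.inl) + (x ∘ Sum.inr) ⬝ᵥ B *ᵥ (x ∘ Sum.inr) := by
  simp [dotProduct, mulVec, Fintype.sum_sum_type, fromBlocks, Finset.mul_sum, mul_comm]

lemma quadform_nonneg {ι : Type} [Fintype ι] {L : Matrix ι ι ℤ} (h : PosDefLat L)
    (x : ι → ℤ) : 0 ≤ x ⬝ᵥ L *ᵥ x := by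
  by_cases hx : x = 0
  · subst hx; simp
  · exact le_of_lt (h.2 x hx)

lemma posdef_fromBlocks {ι κ : Type} [Fintype ι] [Fintype κ]
    {A : Matrix ι ι ℤ} {B : Matrix κ κ ℤ} (hA : PosDefLat A) (hB : PosDefLat B) :
    PosDefLat (fromBlocks A 0 0 B) := by
  constructor
  · unfold Matrix.IsSymm
    rw [fromBlocks_transpose, hA.1, hB.1]
    simp
  · intro x hx
    rw [quadform_fromBlocks]
    by_cases h1 : x ∘ Sum.inl = 0
    · have h2 : x ∘ Sum.inr ≠ 0 := by
        intro h2
        apply hx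
        funext s
        cases s with
        | inl i => exact congrFun h1 i
        | inr j => exact congrFun h2 j
      have := hB.2 _ h2
      have := quadform_nonneg hA (x ∘ Sum.inl)
      omega
    · have := hA.2 _ h1
      have := quadform_nonneg hB (x ∘ Sum.inr)
      omega

lemma fromBlocks_represents_left {ι κ : Type} [Fintype ι] [Fintype κ] [DecidableEq ι]
    (A : Matrix ι ι ℤ) (B : Matrix κ κ ℤ) :
    ∃ M : Matrix (ι ⊕ κ) ι ℤ, Mᵀ * (fromBlocks A 0 0 B) * M = A := by
  refine ⟨Matrix.of (fun s j => Sum.elim (fun i => if i = j then (1:ℤ) else 0) (fun _ => 0) s), ?_⟩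
  ext i j
  simp [Matrix.mul_apply, Fintype.sum_sum_type, fromBlocks]

lemma fromBlocks_represents_right {ι κ : Type} [Fintype ι] [Fintype κ] [DecidableEq κ]
    (A : Matrix ι ι ℤ) (B : Matrix κ κ ℤ) :
    ∃ M : Matrix (ι ⊕ κ) κ ℤ, Mᵀ * (fromBlocks A 0 0 B) * M = B := by
  refine ⟨Matrix.of (fun s j => Sum.elim (fun _ => 0) (fun i => if i = j then (1:ℤ) else 0) s), ?_⟩
  ext i j
  simp [Matrix.mul_apply, Fintype.sum_sum_type, fromBlocks]

lemma fromBlocks_split {ι κ μ : Type} [Fintype ι] [Fintype κ] [Fintype μ]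
    (A : Matrix ι ι ℤ) (B : Matrix κ κ ℤ) (M : Matrix (ι ⊕ κ) μ ℤ) :
    Mᵀ * (fromBlocks A 0 0 B) * M
      = (M.submatrix Sum.inl (id : μ → μ))ᵀ * A * (M.submatrix Sum.inl id)
        + (M.submatrix Sum.inr (id : μ → μ))ᵀ * B * (M.submatrix Sum.inr id) := by
  ext i j
  simp [Matrix.mul_apply, Fintype.sum_sum_type, fromBlocks, Finset.sum_mul,
    Finset.mul_sum, mul_comm, mul_left_comm]
lemma exists_big_lattice (n : ℕ) (hn : 0 < n) (l : List (Matrix (Fin n) (Fin n) ℤ))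
    (hl : ∀ A ∈ l, PosDefLat A) :
    ∃ (m : ℕ) (L : Matrix (Fin m) (Fin m) ℤ), PosDefLat L ∧
      (∀ A ∈ l, Represents L A) ∧
      (∀ E : Matrix (Fin n) (Fin n) ℤ, PosDefLat E → AddIndecomposable E →
        Represents L E → ∃ A ∈ l, Represents A E) := by
  induction l with
  | nil =>
    refine ⟨0, 0, ⟨by simp [Matrix.IsSymm], fun x hx => absurd (funext fun i => i.elim0) hx⟩,
      by simp, ?_⟩
    intro E hE _ ⟨M, hM⟩ 
    exfalso
    have h0 : E = 0 := by
      rw [← hM]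
      ext i j
      simp [Matrix.mul_apply]
    have := hE.2 (fun i => if i = ⟨0, hn⟩ then 1 else 0) (by
      intro hc
      have := congrFun hc ⟨0, hn⟩
      simp at this)
    rw [h0] at this
    simp at this
  | cons A l ih =>
    have hA : PosDefLat A := hl A List.mem_cons_self
    obtain ⟨m₀, L₀, hL₀, hrep, hkey⟩ := ih (fun B hB => hl B (List.mem_cons_of_mem A hB))
    set K : Matrix (Fin n ⊕ Fin m₀) (Fin n ⊕ Fin m₀) ℤ := fromBlocks A 0 0 L₀ with hK
    have hKpd : PosDefLat K := posdef_fromBlocks hA hL₀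
    set e : Fin (n + m₀) ≃ (Fin n ⊕ Fin m₀) := finSumFinEquiv.symm with he
    refine ⟨n + m₀, K.submatrix e e, posdef_submatrix e hKpd, ?_, ?_⟩
    · intro B hB
      rcases List.mem_cons.mp hB with h | h
      · rw [h]
        exact represents_submatrix e K A (fromBlocks_represents_left A L₀)
      · exact represents_submatrix e K B
          (represents_trans (fromBlocks_represents_right A L₀) (hrep B h))
    · intro E hE hind hrepE
      have hrepK : Represents K E := by
        have := represents_submatrix e.symm (K.submatrix e e) E hrepE
        simpa [_root_.Represents] using this
      obtain ⟨M, hM⟩ := hrepK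
      rw [fromBlocks_split] at hM
      rcases hind n m₀ A L₀ hA hL₀ _ _ hM with h | h
      · -- top block zero: E represented by L₀
        rw [h] at hM
        simp at hM
        obtain ⟨B, hB, hBE⟩ := hkey E hE hind ⟨_, hM⟩
        exact ⟨B, List.mem_cons_of_mem A hB, hBE⟩
      · rw [h] at hM
        simp at hM
        exact ⟨A, List.mem_cons_self, ⟨_, hM⟩⟩

lemma criterion_set_contains_indecomposable_aux (n : ℕ) (hn : 0 < n)
    (hex : ∃ E : Matrix (Fin n) (Fin n) ℤ, PosDefLat E ∧ AddIndecomposable E) :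
    ∀ S : Finset (Matrix (Fin n) (Fin n) ℤ), IsCriterionSet n S →
      ∃ E ∈ S, AddIndecomposable E := by
  intro S hS
  by_contra hcon
  push_neg at hcon
  obtain ⟨E, hE, hind⟩ := hex
  obtain ⟨m, L, hL, hrep, hkey⟩ := exists_big_lattice n hn S.toList
    (fun A hA => hS.1 A (Finset.mem_toList.mp hA))
  have huniv : NUniversal n L :=
    (hS.2 m L hL).mpr (fun A hA => hrep A (Finset.mem_toList.mpr hA))
  obtain ⟨A, hAS, M, hM⟩ := hkey E hE hind (huniv E hE)
  have hAmem := Finset.mem_toList.mp hAS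
  -- A is decomposable
  have hdec := hcon A hAmem
  unfold AddIndecomposable at hdec
  push_neg at hdec
  obtain ⟨m₁, m₂, B₁, B₂, hB₁, hB₂, N₁, N₂, hsum, hN₁, hN₂⟩ := hdec
  -- det M ≠ 0
  have hdet : M.det ≠ 0 := by
    intro hd
    obtain ⟨v, hv, hMv⟩ := Matrix.exists_mulVec_eq_zero_iff.mpr hd
    have : v ⬝ᵥ E *ᵥ v = 0 := by
      rw [← hM, ← Matrix.mulVec_mulVec, ← Matrix.mulVec_mulVec, hMv]
      simp
    have := hE.2 v hv
    omega
  have hsum2 : (N₁ * M)ᵀ * B₁ * (N₁ * M) + (N₂ * M)ᵀ * B₂ * (N₂ * M) = E := by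
    rw [← hM, ← hsum]
    simp only [transpose_mul, Matrix.add_mul, Matrix.mul_add, Matrix.mul_assoc]
  rcases hind m₁ m₂ B₁ B₂ hB₁ hB₂ _ _ hsum2 with h | h
  · apply hN₁
    have : N₁ * M * M.adjugate = 0 := by rw [h]; simp
    rw [Matrix.mul_assoc, Matrix.mul_adjugate, Matrix.mul_smul, Matrix.mul_one] at this
    ext i j
    have h2 := congrFun (congrFun this i) j
    simp only [Matrix.smul_apply, smul_eq_mul, Matrix.zero_apply] at h2
    rcases mul_eq_zero.mp h2 with h' | h'
    · exact absurd h' hdet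
    · simpa using h'
  · apply hN₂
    have : N₂ * M * M.adjugate = 0 := by rw [h]; simp
    rw [Matrix.mul_assoc, Matrix.mul_adjugate, Matrix.mul_smul, Matrix.mul_one] at this
    ext i j
    have h2 := congrFun (congrFun this i) j
    simp only [Matrix.smul_apply, smul_eq_mul, Matrix.zero_apply] at h2
    rcases mul_eq_zero.mp h2 with h' | h'
    · exact absurd h' hdet
    · simpa using h'

/-- If there is an additively indecomposable positive-definite lattice of rank
`n`, then every `n`-criterion set contains an additively indecomposable lattice. -/
theorem criterion_set_contains_indecomposable (n : ℕ) (hn : 0 < n)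
    (hex : ∃ E : Matrix (Fin n) (Fin n) ℤ, PosDefLat E ∧ AddIndecomposable E) :
    ∀ S : Finset (Matrix (Fin n) (Fin n) ℤ), IsCriterionSet n S →
      ∃ E ∈ S, AddIndecomposable E := by
  exact criterion_set_contains_indecomposable_aux n hn hex
end

section
/- The lattice E_8 is additively indecomposable: if an orthogonal sum L_1 ⊥ L_2 of positive-definite ℤ-lattices represents E_8, then the image of E_8 lies entirely in L_1 or entirely in L_2 (i.e., its projection to one factor is zero). -/
open Matrix

namespace E8Indec

open Matrix

/-- The inverse of `E8` (it is unimodular). -/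
def Einv : Matrix (Fin 8) (Fin 8) ℤ :=
  !![2, 3, 4, 5, 6, 4, 2, 3;
     3, 6, 8, 10, 12, 8, 4, 6;
     4, 8, 12, 15, 18, 12, 6, 9;
     5, 10, 15, 20, 24, 16, 8, 12;
     6, 12, 18, 24, 30, 20, 10, 15;
     4, 8, 12, 16, 20, 14, 7, 10;
     2, 4, 6, 8, 10, 7, 4, 5;
     3, 6, 9, 12, 15, 10, 5, 8]

/-- An upper triangular "half" of `E8`, witnessing that `E8` is even. -/
def U8 : Matrix (Fin 8) (Fin 8) ℤ :=
  !![1, -1, 0, 0, 0, 0, 0, 0;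
     0, 1, -1, 0, 0, 0, 0, 0;
     0, 0, 1, -1, 0, 0, 0, 0;
     0, 0, 0, 1, -1, 0, 0, 0;
     0, 0, 0, 0, 1, -1, 0, -1;
     0, 0, 0, 0, 0, 1, -1, 0;
     0, 0, 0, 0, 0, 0, 1, 0;
     0, 0, 0, 0, 0, 0, 0, 1]

lemma E8_mul_Einv : E8 * Einv = 1 := by decide

lemma E8_eq_half : E8 = U8 + U8ᵀ := by decide

lemma E8_diag : ∀ i : Fin 8, E8 i i = 2 := by decide

lemma quad_expand {m : ℕ} (B : Matrix (Fin m) (Fin m) ℤ) (M : Matrix (Fin m) (Fin 8) ℤ)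
    (x y : Fin 8 → ℤ) :
    x ⬝ᵥ (Mᵀ * B * M) *ᵥ y = (M *ᵥ x) ⬝ᵥ B *ᵥ (M *ᵥ y) := by
  rw [Matrix.mul_assoc, ← Matrix.mulVec_mulVec, ← Matrix.mulVec_mulVec,
    Matrix.dotProduct_mulVec x, Matrix.vecMul_transpose, Matrix.dotProduct_mulVec (M *ᵥ x)]

lemma quad_nonneg {m : ℕ} {B : Matrix (Fin m) (Fin m) ℤ} (hB : PosDefLat B)
    (M : Matrix (Fin m) (Fin 8) ℤ) (x : Fin 8 → ℤ) :
    0 ≤ x ⬝ᵥ (Mᵀ * B * M) *ᵥ x := by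
  rw [quad_expand]
  rcases eq_or_ne (M *ᵥ x) 0 with h0 | h0
  · rw [h0]; simp
  · exact (hB.2 _ h0).le

lemma quad_zero_mulVec {m : ℕ} {B : Matrix (Fin m) (Fin m) ℤ} (hB : PosDefLat B)
    (M : Matrix (Fin m) (Fin 8) ℤ) (x : Fin 8 → ℤ)
    (hx : x ⬝ᵥ (Mᵀ * B * M) *ᵥ x = 0) : M *ᵥ x = 0 := by
  by_contra h0
  have := hB.2 _ h0
  rw [quad_expand] at hx
  omega

lemma quad_zero {m : ℕ} {B : Matrix (Fin m) (Fin m) ℤ} (hB : PosDefLat B)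
    (M : Matrix (Fin m) (Fin 8) ℤ) (x : Fin 8 → ℤ)
    (hx : x ⬝ᵥ (Mᵀ * B * M) *ᵥ x = 0) : (Mᵀ * B * M) *ᵥ x = 0 := by
  have hM := quad_zero_mulVec hB M x hx
  rw [Matrix.mul_assoc, ← Matrix.mulVec_mulVec, ← Matrix.mulVec_mulVec, hM]
  simp

lemma tmul_symm {m : ℕ} {B : Matrix (Fin m) (Fin m) ℤ} (hB : PosDefLat B)
    (M : Matrix (Fin m) (Fin 8) ℤ) : (Mᵀ * B * M)ᵀ = Mᵀ * B * M := by
  rw [Matrix.transpose_mul, Matrix.transpose_mul, Matrix.transpose_transpose,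
    hB.1.eq, Matrix.mul_assoc]

lemma single_quad {m : ℕ} (B : Matrix (Fin m) (Fin m) ℤ) (M : Matrix (Fin m) (Fin 8) ℤ)
    (i j : Fin 8) :
    (Pi.single i 1 : Fin 8 → ℤ) ⬝ᵥ (Mᵀ * B * M) *ᵥ (Pi.single j 1) = (Mᵀ * B * M) i j := by
  rw [Matrix.mulVec_single, single_dotProduct]
  simp

/-- The key step: no diagonal entry of a component can equal 1. -/
lemma diag_ne_one {m₁ m₂ : ℕ} {B₁ : Matrix (Fin m₁) (Fin m₁) ℤ}
    {B₂ : Matrix (Fin m₂) (Fin m₂) ℤ} (hB₁ : PosDefLat B₁) (hB₂ : PosDefLat B₂)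
    (M₁ : Matrix (Fin m₁) (Fin 8) ℤ) (M₂ : Matrix (Fin m₂) (Fin 8) ℤ)
    (h : M₁ᵀ * B₁ * M₁ + M₂ᵀ * B₂ * M₂ = E8) (i : Fin 8) :
    (M₁ᵀ * B₁ * M₁) i i ≠ 1 := by
  intro hd
  set A₁ := M₁ᵀ * B₁ * M₁ with hA₁
  set A₂ := M₂ᵀ * B₂ * M₂ with hA₂
  have hA₁s : A₁ᵀ = A₁ := tmul_symm hB₁ M₁
  set r : Fin 8 → ℤ := Pi.single i 1 with hr
  set φ : Fin 8 → ℤ := A₁ *ᵥ r with hφ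
  set u : Fin 8 → ℤ := Einv *ᵥ φ with hu
  have hEu : E8 *ᵥ u = φ := by
    rw [hu, Matrix.mulVec_mulVec, E8_mul_Einv, Matrix.one_mulVec]
  set c : ℤ := u ⬝ᵥ φ with hc
  -- c is even
  have hceven : c = 2 * (u ⬝ᵥ U8 *ᵥ u) := by
    have h1 : u ⬝ᵥ U8ᵀ *ᵥ u = u ⬝ᵥ U8 *ᵥ u := by
      rw [Matrix.dotProduct_mulVec, Matrix.vecMul_transpose, dotProduct_comm]
    calc c = u ⬝ᵥ E8 *ᵥ u := by rw [hEu]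
    _ = u ⬝ᵥ (U8 + U8ᵀ) *ᵥ u := by rw [← E8_eq_half]
    _ = u ⬝ᵥ U8 *ᵥ u + u ⬝ᵥ U8ᵀ *ᵥ u := by
        rw [Matrix.add_mulVec, dotProduct_add]
    _ = 2 * (u ⬝ᵥ U8 *ᵥ u) := by rw [h1]; ring
  -- bilinear form values
  have huAr : u ⬝ᵥ A₁ *ᵥ r = c := rfl
  have hrAu : r ⬝ᵥ A₁ *ᵥ u = c := by
    have h1 : A₁ *ᵥ u = u ᵥ* A₁ := by
      conv_lhs => rw [← hA₁s]
      rw [Matrix.mulVec_transpose]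
    have h2 : c = (u ᵥ* A₁) ⬝ᵥ r := by
      rw [hc, hφ, Matrix.dotProduct_mulVec]
    rw [h2, h1, hr, single_dotProduct, dotProduct_single]
    ring
  have hrAr : r ⬝ᵥ A₁ *ᵥ r = 1 := by
    rw [hr, single_quad, ← hA₁]
    exact hd
  -- Cauchy–Schwarz style inequality
  have hkey : 0 ≤ (u - c • r) ⬝ᵥ A₁ *ᵥ (u - c • r) := quad_nonneg hB₁ M₁ _
  have hexp : (u - c • r) ⬝ᵥ A₁ *ᵥ (u - c • r) = u ⬝ᵥ A₁ *ᵥ u - c * c := by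
    rw [Matrix.mulVec_sub, Matrix.mulVec_smul, sub_dotProduct,
      dotProduct_sub, dotProduct_sub, smul_dotProduct,
      smul_dotProduct, dotProduct_smul, dotProduct_smul,
      huAr, hrAu, hrAr]
    simp only [smul_eq_mul]
    ring
  have hcs : c * c ≤ u ⬝ᵥ A₁ *ᵥ u := by rw [hexp] at hkey; omega
  -- sum of the two quadratic values is c
  have hsum : u ⬝ᵥ A₁ *ᵥ u + u ⬝ᵥ A₂ *ᵥ u = c := by
    have : A₁ *ᵥ u + A₂ *ᵥ u = φ := by
      rw [← Matrix.add_mulVec, h, hEu]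
    calc u ⬝ᵥ A₁ *ᵥ u + u ⬝ᵥ A₂ *ᵥ u = u ⬝ᵥ (A₁ *ᵥ u + A₂ *ᵥ u) := by
          rw [dotProduct_add]
    _ = u ⬝ᵥ φ := by rw [this]
    _ = c := rfl
  have hQ₂ : 0 ≤ u ⬝ᵥ A₂ *ᵥ u := quad_nonneg hB₂ M₂ u
  have hQ₁n : 0 ≤ u ⬝ᵥ A₁ *ᵥ u := quad_nonneg hB₁ M₁ u
  -- conclude c = 0
  clear_value r φ u c
  have hcle : c * c ≤ c := by omega
  have hc0 : 0 ≤ c := le_trans (mul_self_nonneg c) hcle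
  have hc1 : c ≤ 1 := by nlinarith
  have hczero : c = 0 := by omega
  -- now both quadratic values vanish
  have hQ₁0 : u ⬝ᵥ A₁ *ᵥ u = 0 := by omega
  have hQ₂0 : u ⬝ᵥ A₂ *ᵥ u = 0 := by omega
  have hA₁u : A₁ *ᵥ u = 0 := quad_zero hB₁ M₁ u hQ₁0
  have hA₂u : A₂ *ᵥ u = 0 := quad_zero hB₂ M₂ u hQ₂0
  have hφ0 : φ = 0 := by
    rw [← hEu, ← h, Matrix.add_mulVec, hA₁u, hA₂u]
    simp
  have hφi : φ i = 1 := by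
    have : φ i = A₁ i i := by
      rw [hφ, hr, Matrix.mulVec_single]
      simp
    rw [this]; exact hd
  rw [hφ0] at hφi
  simp at hφi

/-- Diagonal entries of each component are 0 or 2. -/
lemma diag_02 {m₁ m₂ : ℕ} {B₁ : Matrix (Fin m₁) (Fin m₁) ℤ}
    {B₂ : Matrix (Fin m₂) (Fin m₂) ℤ} (hB₁ : PosDefLat B₁) (hB₂ : PosDefLat B₂)
    (M₁ : Matrix (Fin m₁) (Fin 8) ℤ) (M₂ : Matrix (Fin m₂) (Fin 8) ℤ)
    (h : M₁ᵀ * B₁ * M₁ + M₂ᵀ * B₂ * M₂ = E8) (i : Fin 8) :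
    (M₁ᵀ * B₁ * M₁) i i = 0 ∨ (M₁ᵀ * B₁ * M₁) i i = 2 := by
  have hsum : (M₁ᵀ * B₁ * M₁) i i + (M₂ᵀ * B₂ * M₂) i i = 2 := by
    have := congrFun (congrFun h i) i
    rw [E8_diag i] at this
    exact this
  have h1 : 0 ≤ (M₁ᵀ * B₁ * M₁) i i := by
    have := quad_nonneg hB₁ M₁ (Pi.single i 1)
    rwa [single_quad] at this
  have h2 : 0 ≤ (M₂ᵀ * B₂ * M₂) i i := by
    have := quad_nonneg hB₂ M₂ (Pi.single i 1)
    rwa [single_quad] at this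
  have h3 := diag_ne_one hB₁ hB₂ M₁ M₂ h i
  have h4 := diag_ne_one hB₂ hB₁ M₂ M₁ (by rw [add_comm]; exact h) i
  omega

/-- Zero diagonal propagates along edges of the Dynkin diagram. -/
lemma edge_prop {m₁ m₂ : ℕ} {B₁ : Matrix (Fin m₁) (Fin m₁) ℤ}
    {B₂ : Matrix (Fin m₂) (Fin m₂) ℤ} (hB₁ : PosDefLat B₁) (hB₂ : PosDefLat B₂)
    (M₁ : Matrix (Fin m₁) (Fin 8) ℤ) (M₂ : Matrix (Fin m₂) (Fin 8) ℤ)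
    (h : M₁ᵀ * B₁ * M₁ + M₂ᵀ * B₂ * M₂ = E8) (i j : Fin 8) (hij : E8 j i = -1)
    (hi : (M₁ᵀ * B₁ * M₁) i i = 0) : (M₁ᵀ * B₁ * M₁) j j = 0 := by
  by_contra hj
  have hj2 : (M₁ᵀ * B₁ * M₁) j j = 2 := by
    rcases diag_02 hB₁ hB₂ M₁ M₂ h j with h0 | h2
    · exact absurd h0 hj
    · exact h2
  have hsum : (M₁ᵀ * B₁ * M₁) j j + (M₂ᵀ * B₂ * M₂) j j = 2 := by
    have := congrFun (congrFun h j) j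
    rw [E8_diag j] at this
    exact this
  have hA₂j : (M₂ᵀ * B₂ * M₂) j j = 0 := by omega
  -- A₁ j i = 0
  have hA₁ji : (M₁ᵀ * B₁ * M₁) j i = 0 := by
    have hz : (M₁ᵀ * B₁ * M₁) *ᵥ (Pi.single i 1) = 0 := by
      apply quad_zero hB₁ M₁
      rw [single_quad]
      exact hi
    simpa [Matrix.mulVec_single] using congrFun hz j
  -- A₂ j i = 0
  have hA₂ji : (M₂ᵀ * B₂ * M₂) j i = 0 := by
    have hz : (M₂ᵀ * B₂ * M₂) *ᵥ (Pi.single j 1) = 0 := by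
      apply quad_zero hB₂ M₂
      rw [single_quad]
      exact hA₂j
    have h1 : (M₂ᵀ * B₂ * M₂) i j = 0 := by
      simpa [Matrix.mulVec_single] using congrFun hz i
    have hs := tmul_symm hB₂ M₂
    calc (M₂ᵀ * B₂ * M₂) j i = (M₂ᵀ * B₂ * M₂)ᵀ i j := rfl
    _ = (M₂ᵀ * B₂ * M₂) i j := by rw [hs]
    _ = 0 := h1
  have := congrFun (congrFun h j) i
  rw [hij] at this
  have : (M₁ᵀ * B₁ * M₁) j i + (M₂ᵀ * B₂ * M₂) j i = -1 := this
  omega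

/-- If all diagonal entries vanish the component matrix is zero. -/
lemma all_diag_zero {m₁ : ℕ} {B₁ : Matrix (Fin m₁) (Fin m₁) ℤ} (hB₁ : PosDefLat B₁)
    (M₁ : Matrix (Fin m₁) (Fin 8) ℤ)
    (hd : ∀ i : Fin 8, (M₁ᵀ * B₁ * M₁) i i = 0) : M₁ = 0 := by
  ext a b
  have hz : M₁ *ᵥ (Pi.single b 1) = 0 := by
    apply quad_zero_mulVec hB₁ M₁
    rw [single_quad]
    exact hd b
  simpa [Matrix.mulVec_single] using congrFun hz a

/-- If the first diagonal entry of the first component vanishes, so does the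
whole first component. -/
lemma first_zero {m₁ m₂ : ℕ} {B₁ : Matrix (Fin m₁) (Fin m₁) ℤ}
    {B₂ : Matrix (Fin m₂) (Fin m₂) ℤ} (hB₁ : PosDefLat B₁) (hB₂ : PosDefLat B₂)
    (M₁ : Matrix (Fin m₁) (Fin 8) ℤ) (M₂ : Matrix (Fin m₂) (Fin 8) ℤ)
    (h : M₁ᵀ * B₁ * M₁ + M₂ᵀ * B₂ * M₂ = E8)
    (h0 : (M₁ᵀ * B₁ * M₁) 0 0 = 0) : M₁ = 0 := by
  have e10 : E8 1 0 = -1 := by decide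
  have e21 : E8 2 1 = -1 := by decide
  have e32 : E8 3 2 = -1 := by decide
  have e43 : E8 4 3 = -1 := by decide
  have e54 : E8 5 4 = -1 := by decide
  have e65 : E8 6 5 = -1 := by decide
  have e74 : E8 7 4 = -1 := by decide
  have h1 := edge_prop hB₁ hB₂ M₁ M₂ h 0 1 e10 h0
  have h2 := edge_prop hB₁ hB₂ M₁ M₂ h 1 2 e21 h1
  have h3 := edge_prop hB₁ hB₂ M₁ M₂ h 2 3 e32 h2
  have h4 := edge_prop hB₁ hB₂ M₁ M₂ h 3 4 e43 h3
  have h5 := edge_prop hB₁ hB₂ M₁ M₂ h 4 5 e54 h4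
  have h6 := edge_prop hB₁ hB₂ M₁ M₂ h 5 6 e65 h5
  have h7 := edge_prop hB₁ hB₂ M₁ M₂ h 4 7 e74 h4
  apply all_diag_zero hB₁ M₁
  intro i
  fin_cases i <;> assumption

end E8Indec

/-- `E₈` is additively indecomposable: any representation of `E₈` into an
orthogonal sum of positive-definite lattices has zero projection to one factor. -/
theorem E8_addIndecomposable : AddIndecomposable E8 := by
  intro m₁ m₂ B₁ B₂ hB₁ hB₂ M₁ M₂ h
  rcases E8Indec.diag_02 hB₁ hB₂ M₁ M₂ h 0 with h0 | h0
  · exact Or.inl (E8Indec.first_zero hB₁ hB₂ M₁ M₂ h h0)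
  · have h' : M₂ᵀ * B₂ * M₂ + M₁ᵀ * B₁ * M₁ = E8 := by rw [add_comm]; exact h
    have hsum : (M₁ᵀ * B₁ * M₁) 0 0 + (M₂ᵀ * B₂ * M₂) 0 0 = 2 := by
      have := congrFun (congrFun h 0) 0
      rw [E8Indec.E8_diag 0] at this
      exact this
    have h0' : (M₂ᵀ * B₂ * M₂) 0 0 = 0 := by omega
    exact Or.inr (E8Indec.first_zero hB₂ hB₁ M₂ M₁ h' h0')
end

section
/- The set {I_8, E_8} is a minimal 8-criterion set: the lattice E_8 represents E_8 but does not represent I_8, and I_8 represents I_8 but does not represent E_8; hence neither singleton {I_8} nor {E_8} is an 8-criterion set. -/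
open Matrix

def E8inv : Matrix (Fin 8) (Fin 8) ℤ :=
  !![2, 3, 4, 5, 6, 4, 2, 3;
     3, 6, 8, 10, 12, 8, 4, 6;
     4, 8, 12, 15, 18, 12, 6, 9;
     5, 10, 15, 20, 24, 16, 8, 12;
     6, 12, 18, 24, 30, 20, 10, 15;
     4, 8, 12, 16, 20, 14, 7, 10;
     2, 4, 6, 8, 10, 7, 4, 5;
     3, 6, 9, 12, 15, 10, 5, 8]

set_option maxHeartbeats 1000000 in
lemma E8_inv_mul : E8inv * E8 = 1 := by decide

lemma rep_self {ι : Type} [Fintype ι] [DecidableEq ι] (A : Matrix ι ι ℤ) : Represents A A :=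
  ⟨1, by simp⟩

lemma conj_diag {ι κ : Type} [Fintype ι] [Fintype κ]
    (A : Matrix ι ι ℤ) (M : Matrix ι κ ℤ) (k : κ) :
    (Mᵀ * A * M) k k = (fun j => M j k) ⬝ᵥ A *ᵥ (fun j => M j k) := by
  simp only [Matrix.mul_apply, Matrix.transpose_apply, Matrix.mulVec, dotProduct,
    Finset.mul_sum, Finset.sum_mul]
  rw [Finset.sum_comm]
  congr 1; ext i; congr 1; ext j; ring

set_option maxHeartbeats 1000000 in
lemma E8_even (v : Fin 8 → ℤ) : ∃ q : ℤ, v ⬝ᵥ E8 *ᵥ v = 2 * q := by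
  refine ⟨v 0 ^ 2 - v 0 * v 1 + v 1 ^ 2 - v 1 * v 2 + v 2 ^ 2 - v 2 * v 3 + v 3 ^ 2
    - v 3 * v 4 + v 4 ^ 2 - v 4 * v 5 - v 4 * v 7 + v 5 ^ 2 - v 5 * v 6 + v 6 ^ 2
    + v 7 ^ 2, ?_⟩
  have hv : v = ![v 0, v 1, v 2, v 3, v 4, v 5, v 6, v 7] := by
    funext i; fin_cases i <;> rfl
  have h5 : ![v 0, v 1, v 2, v 3, v 4, v 5, v 6, v 7] 5 = v 5 := rfl
  have h6 : ![v 0, v 1, v 2, v 3, v 4, v 5, v 6, v 7] 6 = v 6 := rfl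
  have h7 : ![v 0, v 1, v 2, v 3, v 4, v 5, v 6, v 7] 7 = v 7 := rfl
  rw [hv]
  simp [h5, h6, h7, E8, Matrix.cons_mulVec, Matrix.cons_dotProduct, Matrix.vecHead, Matrix.vecTail]
  ring

lemma not_rep_E8_one : ¬ Represents E8 (1 : Matrix (Fin 8) (Fin 8) ℤ) := by
  rintro ⟨M, hM⟩
  have h := conj_diag E8 M 0
  rw [hM] at h
  simp [Matrix.one_apply] at h
  obtain ⟨q, hq⟩ := E8_even (fun j => M j 0)
  omega

lemma not_rep_one_E8 : ¬ Represents (1 : Matrix (Fin 8) (Fin 8) ℤ) E8 := by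
  rintro ⟨M, hM⟩
  rw [Matrix.mul_one] at hM
  have hNM : (E8inv * Mᵀ) * M = 1 := by
    rw [Matrix.mul_assoc, hM, E8_inv_mul]
  have hMN : M * (E8inv * Mᵀ) = 1 := mul_eq_one_comm.mpr hNM
  set N := E8inv * Mᵀ with hN
  refine not_rep_E8_one ⟨N, ?_⟩
  rw [← hM]
  calc Nᵀ * (Mᵀ * M) * N = (M * N)ᵀ * (M * N) := by
        simp only [Matrix.transpose_mul, Matrix.mul_assoc]
    _ = 1 := by rw [hMN]; simp

/-- `{I_8, E_8}` is a minimal `8`-criterion set: each of the two lattices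
represents itself but not the other, so neither singleton is an `8`-criterion
set. -/
theorem minimal_8_criterion
    (hOh : IsCriterionSet 8 ({1, E8} : Finset (Matrix (Fin 8) (Fin 8) ℤ))) :
    Represents E8 E8 ∧
    ¬ Represents E8 (1 : Matrix (Fin 8) (Fin 8) ℤ) ∧
    Represents (1 : Matrix (Fin 8) (Fin 8) ℤ) (1 : Matrix (Fin 8) (Fin 8) ℤ) ∧
    ¬ Represents (1 : Matrix (Fin 8) (Fin 8) ℤ) E8 ∧
    ¬ IsCriterionSet 8 ({1} : Finset (Matrix (Fin 8) (Fin 8) ℤ)) ∧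
    ¬ IsCriterionSet 8 ({E8} : Finset (Matrix (Fin 8) (Fin 8) ℤ)) := by
  have pd1 : PosDefLat (1 : Matrix (Fin 8) (Fin 8) ℤ) := hOh.1 1 (by simp)
  have pdE : PosDefLat E8 := hOh.1 E8 (by simp)
  refine ⟨rep_self E8, not_rep_E8_one, rep_self 1, not_rep_one_E8, ?_, ?_⟩
  · intro h1
    have hu : NUniversal 8 (1 : Matrix (Fin 8) (Fin 8) ℤ) := by
      refine (h1.2 8 1 pd1).mpr ?_
      intro A hA
      simp only [Finset.mem_singleton] at hA
      subst hA; exact rep_self 1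
    exact not_rep_one_E8 ((hOh.2 8 1 pd1).mp hu E8 (by simp))
  · intro hE
    have hu : NUniversal 8 E8 := by
      refine (hE.2 8 E8 pdE).mpr ?_
      intro A hA
      simp only [Finset.mem_singleton] at hA
      subst hA; exact rep_self E8
    exact not_rep_E8_one ((hOh.2 8 E8 pdE).mp hu 1 (by simp))
end
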